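/- arXiv:1510.00284 — 8 statements merged into one kernel-verified Lean document; each statement's English description precedes it below -/
import Mathlib

section
/- Let V be a real normed space, let 0 ≤ q < 1, and let T : V → V satisfy ‖T v₁ − T v₂‖ ≤ q ‖v₁ − v₂‖ for all v₁, v₂ ∈ V, and let u⋆ ∈ V satisfy T u⋆ = u⋆. Then for every v ∈ V and every ũ ∈ V, (1/(1+q)) (‖ũ − v‖ − ‖T v − ũ‖) ≤ ‖v − u⋆‖ ≤ (1/(1−q)) (‖ũ − v‖ + ‖T v − ũ‖). -/
/-- guaranteed two-sided a posteriori bounds (3.8)–(3.9).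
If `T` is a `q`-contraction (`0 ≤ q < 1`) on a real normed space `V` with fixed
point `u⋆`, then for every `v` and every `ũ`,
`(1/(1+q)) (‖ũ − v‖ − ‖T v − ũ‖) ≤ ‖v − u⋆‖ ≤ (1/(1−q)) (‖ũ − v‖ + ‖T v − ũ‖)`. -/
theorem stmt10 {V : Type*} [NormedAddCommGroup V] [NormedSpace ℝ V]
    (q : ℝ) (hq0 : 0 ≤ q) (hq1 : q < 1)
    (T : V → V) (hT : ∀ v1 v2 : V, ‖T v1 - T v2‖ ≤ q * ‖v1 - v2‖)
    (ustar : V) (hu : T ustar = ustar) :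
    ∀ v utilde : V,
      (1 / (1 + q)) * (‖utilde - v‖ - ‖T v - utilde‖) ≤ ‖v - ustar‖ ∧
      ‖v - ustar‖ ≤ (1 / (1 - q)) * (‖utilde - v‖ + ‖T v - utilde‖) := by
  intro v utilde
  have hc : ‖T v - ustar‖ ≤ q * ‖v - ustar‖ := by
    have := hT v ustar; rwa [hu] at this
  -- upper bound on ‖v - T v‖ in terms of ‖v - u⋆‖
  have h1 : ‖v - T v‖ ≤ (1 + q) * ‖v - ustar‖ := by
    have := norm_sub_le_norm_sub_add_norm_sub v ustar (T v)
    have h' : ‖ustar - T v‖ = ‖T v - ustar‖ := norm_sub_rev _ _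
    nlinarith [this]
  -- lower bound
  have h2 : (1 - q) * ‖v - ustar‖ ≤ ‖v - T v‖ := by
    have ht : ‖v - ustar‖ ≤ ‖v - T v‖ + ‖T v - ustar‖ :=
      norm_sub_le_norm_sub_add_norm_sub v (T v) ustar
    nlinarith
  -- triangle on ũ
  have h3 : ‖utilde - v‖ - ‖T v - utilde‖ ≤ ‖v - T v‖ := by
    have := norm_sub_le_norm_sub_add_norm_sub utilde (T v) v
    have e1 : ‖utilde - T v‖ = ‖T v - utilde‖ := norm_sub_rev _ _
    have e2 : ‖T v - v‖ = ‖v - T v‖ := norm_sub_rev _ _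
    linarith
  have h4 : ‖v - T v‖ ≤ ‖utilde - v‖ + ‖T v - utilde‖ := by
    have := norm_sub_le_norm_sub_add_norm_sub v utilde (T v)
    have e1 : ‖v - utilde‖ = ‖utilde - v‖ := norm_sub_rev _ _
    have e2 : ‖utilde - T v‖ = ‖T v - utilde‖ := norm_sub_rev _ _
    linarith
  have hp : (0:ℝ) < 1 + q := by linarith
  have hm : (0:ℝ) < 1 - q := by linarith
  constructor
  · rw [div_mul_eq_mul_div, one_mul, div_le_iff₀ hp]
    nlinarith
  · rw [div_mul_eq_mul_div, one_mul, le_div_iff₀ hm]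
    nlinarith
end

section
/- Let N ≥ 1, let a, b : Fin N → ℝ with b_i > 0 for all i, and suppose λ₀ b_i ≤ a_i ≤ λ₁ b_i for all i, where λ₀, λ₁ ∈ ℝ. Then for every x : Fin N → ℝ, λ₀ · xᵀ A[b] x ≤ xᵀ A[a] x ≤ λ₁ · xᵀ A[b] x. -/
open Matrix

/-- The 1D FEM stiffness matrix (4.4) (0-based indexing, grid factor `1/h` omitted):
tridiagonal with `(A[a])_{i,i} = a_i + a_{i+1}` for `i = 0,…,N−2`,
`(A[a])_{N−1,N−1} = 2 a_{N−1}`, and `(A[a])_{i,i+1} = (A[a])_{i+1,i} = −a_{i+1}`. -/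
def stiff {N : ℕ} (a : Fin N → ℝ) : Matrix (Fin N) (Fin N) ℝ :=
  Matrix.of fun i j =>
    let a' : ℕ → ℝ := fun k => if h : k < N then a ⟨k, h⟩ else 0
    if (i : ℕ) = (j : ℕ) then
      (if (i : ℕ) = N - 1 then 2 * a' i else a' i + a' ((i : ℕ) + 1))
    else if (i : ℕ) + 1 = (j : ℕ) then -a' j
    else if (j : ℕ) + 1 = (i : ℕ) then -a' i
    else 0

noncomputable def dd {N : ℕ} (k i : Fin N) : ℝ :=
  (if i = k then 1 else 0) - (if (i : ℕ) + 1 = (k : ℕ) then 1 else 0)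

lemma stiff_apply {N : ℕ} (a : Fin N → ℝ) (i j : Fin N) :
    stiff a i j = (∑ k, a k * dd k i * dd k j)
      + (if (i : ℕ) = N - 1 ∧ (j : ℕ) = N - 1 then a i else 0) := by
  have hexp : ∀ k : Fin N, a k * dd k i * dd k j =
      a k * (if i = k then (1:ℝ) else 0) * (if j = k then 1 else 0)
      - a k * (if i = k then (1:ℝ) else 0) * (if (j:ℕ)+1 = (k:ℕ) then 1 else 0)
      - a k * (if (i:ℕ)+1 = (k:ℕ) then (1:ℝ) else 0) * (if j = k then 1 else 0)
      + a k * (if (i:ℕ)+1 = (k:ℕ) then (1:ℝ) else 0) * (if (j:ℕ)+1 = (k:ℕ) then 1 else 0) := by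
    intro k; unfold dd; ring
  rw [Finset.sum_congr rfl fun k _ => hexp k]
  rw [Finset.sum_add_distrib, Finset.sum_sub_distrib, Finset.sum_sub_distrib]
  have S1 : ∑ k, a k * (if i = k then (1:ℝ) else 0) * (if j = k then 1 else 0)
      = if j = i then a i else 0 := by
    rw [Finset.sum_eq_single i]
    · simp
    · intro k _ hk; rw [if_neg (fun h : i = k => hk h.symm)]; ring
    · simp
  have S2 : ∑ k, a k * (if i = k then (1:ℝ) else 0) * (if (j:ℕ)+1 = (k:ℕ) then 1 else 0)
      = if (j:ℕ)+1 = (i:ℕ) then a i else 0 := by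
    rw [Finset.sum_eq_single i]
    · simp
    · intro k _ hk; rw [if_neg (fun h : i = k => hk h.symm)]; ring
    · simp
  have S3 : ∑ k, a k * (if (i:ℕ)+1 = (k:ℕ) then (1:ℝ) else 0) * (if j = k then 1 else 0)
      = if (i:ℕ)+1 = (j:ℕ) then a j else 0 := by
    rw [Finset.sum_eq_single j]
    · by_cases h : (i:ℕ)+1 = (j:ℕ) <;> simp [h]
    · intro k _ hk; rw [if_neg (fun h : j = k => hk h.symm)]; ring
    · simp
  have S4 : ∑ k, a k * (if (i:ℕ)+1 = (k:ℕ) then (1:ℝ) else 0) * (if (j:ℕ)+1 = (k:ℕ) then 1 else 0)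
      = if h : (i:ℕ)+1 < N then (if (j:ℕ) = (i:ℕ) then a ⟨(i:ℕ)+1, h⟩ else 0) else 0 := by
    by_cases h : (i:ℕ)+1 < N
    · rw [dif_pos h, Finset.sum_eq_single (⟨(i:ℕ)+1, h⟩ : Fin N)]
      · by_cases hji : (j:ℕ) = (i:ℕ) <;> simp [hji]
      · intro k _ hk
        rw [if_neg (fun hc : (i:ℕ)+1 = (k:ℕ) => hk (Fin.ext hc.symm))]; ring
      · simp
    · rw [dif_neg h, Finset.sum_eq_zero]
      intro k _
      rw [if_neg (fun hc : (i:ℕ)+1 = (k:ℕ) => h (hc ▸ k.isLt))]; ring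
  rw [S1, S2, S3, S4]
  have hi := i.isLt
  have hj := j.isLt
  simp only [stiff, Matrix.of_apply, Fin.ext_iff]
  split_ifs <;> first | (exfalso; omega) | ((try simp only [Fin.eta]); ring) <;> try omega

lemma quad {N : ℕ} (hN : 1 ≤ N) (a : Fin N → ℝ) (x : Fin N → ℝ) :
    x ⬝ᵥ (stiff a).mulVec x =
      (∑ k, a k * (∑ i, dd k i * x i) ^ 2)
        + a ⟨N - 1, by omega⟩ * (x ⟨N - 1, by omega⟩) ^ 2 := by
  have hL : N - 1 < N := by omega
  set L : Fin N := ⟨N - 1, hL⟩ with hLdef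
  have hextra : ∀ i : Fin N,
      (∑ j : Fin N, (if (i:ℕ) = N - 1 ∧ (j:ℕ) = N - 1 then a i else 0) * x j)
        = if (i:ℕ) = N - 1 then a i * x L else 0 := by
    intro i
    rw [Finset.sum_eq_single L]
    · by_cases h : (i:ℕ) = N - 1 <;> simp [h, hLdef]
    · intro k _ hk
      rw [if_neg (fun hc => hk (Fin.ext hc.2))]; ring
    · simp
  simp only [dotProduct, mulVec, stiff_apply, add_mul, Finset.sum_add_distrib, mul_add]
  congr 1
  · calc ∑ i, x i * ∑ j, (∑ k, a k * dd k i * dd k j) * x j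
        = ∑ i, ∑ j, ∑ k, x i * (a k * dd k i * dd k j) * x j := by
          refine Finset.sum_congr rfl fun i _ => ?_
          rw [Finset.mul_sum]
          refine Finset.sum_congr rfl fun j _ => ?_
          rw [Finset.sum_mul, Finset.mul_sum]
          exact Finset.sum_congr rfl fun k _ => by ring
      _ = ∑ i, ∑ k, ∑ j, x i * (a k * dd k i * dd k j) * x j :=
          Finset.sum_congr rfl fun i _ => Finset.sum_comm
      _ = ∑ k, ∑ i, ∑ j, x i * (a k * dd k i * dd k j) * x j := Finset.sum_comm
      _ = ∑ k, a k * (∑ i, dd k i * x i) ^ 2 := by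
          refine Finset.sum_congr rfl fun k _ => ?_
          rw [sq, Finset.sum_mul_sum, Finset.mul_sum]
          refine Finset.sum_congr rfl fun i _ => ?_
          rw [Finset.mul_sum]
          exact Finset.sum_congr rfl fun j _ => by ring
  · have : ∀ i : Fin N, x i * ∑ j : Fin N, (if (i:ℕ) = N - 1 ∧ (j:ℕ) = N - 1 then a i else 0) * x j
        = if (i:ℕ) = N - 1 then x i * (a i * x L) else 0 := by
      intro i; rw [hextra i]
      by_cases h : (i:ℕ) = N - 1 <;> simp [h]
    simp only [this]
    rw [Finset.sum_eq_single L]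
    · simp [hLdef]; ring
    · intro k _ hk
      rw [if_neg (fun hc => hk (Fin.ext hc))]
    · simp

/-- discrete spectral equivalence, Assumption (C) of §4.4.
If `b_i > 0` and `λ₀ b_i ≤ a_i ≤ λ₁ b_i` for all `i`, then
`λ₀ xᵀA[b]x ≤ xᵀA[a]x ≤ λ₁ xᵀA[b]x` for every `x`. -/
theorem stmt12 {N : ℕ} (hN : 1 ≤ N) (a b : Fin N → ℝ) (hb : ∀ i, 0 < b i)
    (lam0 lam1 : ℝ) (hab : ∀ i, lam0 * b i ≤ a i ∧ a i ≤ lam1 * b i) :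
    ∀ x : Fin N → ℝ,
      lam0 * (x ⬝ᵥ (stiff b).mulVec x) ≤ x ⬝ᵥ (stiff a).mulVec x ∧
      x ⬝ᵥ (stiff a).mulVec x ≤ lam1 * (x ⬝ᵥ (stiff b).mulVec x) := by

  intro x
  have hL : N - 1 < N := by omega
  set L : Fin N := ⟨N - 1, hL⟩
  constructor
  · calc lam0 * (x ⬝ᵥ (stiff b).mulVec x)
        = (∑ k, (lam0 * b k) * (∑ i, dd k i * x i) ^ 2)
            + (lam0 * b L) * (x L) ^ 2 := by
          rw [quad hN b x, mul_add, Finset.mul_sum]; simp only [mul_assoc]; rfl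
      _ ≤ (∑ k, a k * (∑ i, dd k i * x i) ^ 2) + a L * (x L) ^ 2 := by
          refine add_le_add (Finset.sum_le_sum fun k _ => ?_) ?_
          · exact mul_le_mul_of_nonneg_right (hab k).1 (sq_nonneg _)
          · exact mul_le_mul_of_nonneg_right (hab L).1 (sq_nonneg _)
      _ = x ⬝ᵥ (stiff a).mulVec x := (quad hN a x).symm
  · calc x ⬝ᵥ (stiff a).mulVec x
        = (∑ k, a k * (∑ i, dd k i * x i) ^ 2) + a L * (x L) ^ 2 := quad hN a x
      _ ≤ (∑ k, (lam1 * b k) * (∑ i, dd k i * x i) ^ 2)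
            + (lam1 * b L) * (x L) ^ 2 := by
          refine add_le_add (Finset.sum_le_sum fun k _ => ?_) ?_
          · exact mul_le_mul_of_nonneg_right (hab k).2 (sq_nonneg _)
          · exact mul_le_mul_of_nonneg_right (hab L).2 (sq_nonneg _)
      _ = lam1 * (x ⬝ᵥ (stiff b).mulVec x) := by
          rw [quad hN b x, mul_add, Finset.mul_sum]; simp only [mul_assoc]; rfl
end

section
/- Let N ≥ 1, let ã₀, a : Fin N → ℝ with ã₀_i > 0 for all i, let 0 ≤ Q < 1, and suppose (1 − Q) ã₀_i ≤ a_i ≤ (1 + Q) ã₀_i for all i. If v : Fin N → ℝ is nonzero, λ ∈ ℝ, and A[a] v = λ · (A[ã₀] v) (generalized eigenvalue equation), then 1 − Q ≤ λ ≤ 1 + Q; consequently the ratio of any two such generalized eigenvalues is at most (1 + Q)/(1 − Q). -/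
open Matrix

namespace S13
open Finset

def ex {N : ℕ} (a : Fin N → ℝ) : ℕ → ℝ := fun k => if h : k < N then a ⟨k, h⟩ else 0

lemma ex_coe {N : ℕ} (a : Fin N → ℝ) (i : Fin N) : ex a i = a i := by
  simp [ex, i.isLt]

lemma ex_of_ge {N : ℕ} (a : Fin N → ℝ) {k : ℕ} (h : N ≤ k) : ex a k = 0 := by
  simp [ex]; omega

lemma row_eq {N : ℕ} (a v : Fin N → ℝ) (i : Fin N) :
    (stiff a).mulVec v i =
      (ex a i + ex a ((i:ℕ)+1) + (if (i:ℕ) = N - 1 then ex a i else 0)) * ex v i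
      - ex a ((i:ℕ)+1) * ex v ((i:ℕ)+1)
      - (if (i:ℕ) = 0 then 0 else ex a i * ex v ((i:ℕ)-1)) := by
  have haN : ex a N = 0 := ex_of_ge a le_rfl
  have hiN : (i:ℕ) < N := i.isLt
  have step1 : (stiff a).mulVec v i = ∑ k ∈ range N,
      ((if (i:ℕ) = k then (if (i:ℕ) = N-1 then 2 * ex a i else ex a i + ex a ((i:ℕ)+1))
        else if (i:ℕ)+1 = k then -ex a k
        else if k+1 = (i:ℕ) then -ex a i
        else 0) * ex v k) := by
    rw [Matrix.mulVec, dotProduct,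
      ← Fin.sum_univ_eq_sum_range (fun k =>
        ((if (i:ℕ) = k then (if (i:ℕ) = N-1 then 2 * ex a i else ex a i + ex a ((i:ℕ)+1))
          else if (i:ℕ)+1 = k then -ex a k
          else if k+1 = (i:ℕ) then -ex a i
          else 0) * ex v k)) N]
    apply Finset.sum_congr rfl
    intro j _
    simp [stiff, ex, ex_coe]
  rw [step1]
  have split : ∀ k ∈ range N,
      ((if (i:ℕ) = k then (if (i:ℕ) = N-1 then 2 * ex a i else ex a i + ex a ((i:ℕ)+1))
        else if (i:ℕ)+1 = k then -ex a k
        else if k+1 = (i:ℕ) then -ex a i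
        else 0) * ex v k) =
      (if k = (i:ℕ) then (ex a i + ex a ((i:ℕ)+1) + (if (i:ℕ) = N - 1 then ex a i else 0)) * ex v i else 0)
      + (if k = (i:ℕ)+1 then -(ex a ((i:ℕ)+1) * ex v ((i:ℕ)+1)) else 0)
      + (if ((i:ℕ) ≠ 0 ∧ k = (i:ℕ)-1) then -(ex a i * ex v ((i:ℕ)-1)) else 0) := by
    intro k hk
    simp only [mem_range] at hk
    split_ifs <;>
      first
        | omega
        | (try rw [show k = (i:ℕ) from by omega]
           try rw [show (i:ℕ)+1 = N from by omega, haN]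
           try rw [show k = (i:ℕ)-1 from by omega]
           try rw [show k = (i:ℕ)+1 from by omega]
           ring)
  rw [Finset.sum_congr rfl split]
  rw [Finset.sum_add_distrib, Finset.sum_add_distrib,
    Finset.sum_ite_eq' (range N), Finset.sum_ite_eq' (range N),
    if_pos (mem_range.mpr hiN)]
  have h2nd : (if (i:ℕ)+1 ∈ range N then -(ex a ((i:ℕ)+1) * ex v ((i:ℕ)+1)) else 0)
      = -(ex a ((i:ℕ)+1) * ex v ((i:ℕ)+1)) := by
    by_cases h : (i:ℕ)+1 < N
    · rw [if_pos (mem_range.mpr h)]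
    · have : (i:ℕ)+1 = N := by omega
      rw [this, haN, if_neg Finset.notMem_range_self]; ring
  rw [h2nd]
  by_cases h0 : (i:ℕ) = 0
  · simp only [h0, ne_eq, not_true_eq_false, false_and, if_false, if_pos rfl]
    simp
    ring
  · have : ∀ k ∈ range N, (if ((i:ℕ) ≠ 0 ∧ k = (i:ℕ)-1) then -(ex a i * ex v ((i:ℕ)-1)) else 0)
        = (if k = (i:ℕ)-1 then -(ex a i * ex v ((i:ℕ)-1)) else 0) := by
      intro k _; simp [h0]
    rw [Finset.sum_congr rfl this, Finset.sum_ite_eq' (range N),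
      if_pos (mem_range.mpr (by omega)), if_neg h0]
    ring

def qv {N : ℕ} (v : Fin N → ℝ) (k : ℕ) : ℝ :=
  (ex v k - if k = 0 then 0 else ex v (k-1))^2

def quadE {N : ℕ} (a v : Fin N → ℝ) : ℝ :=
  (∑ i ∈ range N, ex a i * qv v i) + ex a (N-1) * (ex v (N-1))^2

lemma quad_eq {N : ℕ} (a v : Fin N → ℝ) :
    v ⬝ᵥ (stiff a).mulVec v = quadE a v := by
  rcases Nat.eq_zero_or_pos N with h0 | hN
  · subst h0
    simp [quadE, ex, dotProduct]
  obtain ⟨M, rfl⟩ : ∃ M, N = M + 1 := ⟨N-1, by omega⟩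
  have haN : ex a (M+1) = 0 := ex_of_ge a le_rfl
  have step1 : v ⬝ᵥ (stiff a).mulVec v = ∑ k ∈ range (M+1),
      (ex v k * ((ex a k + ex a (k+1) + (if k = M then ex a k else 0)) * ex v k
        - ex a (k+1) * ex v (k+1) - (if k = 0 then 0 else ex a k * ex v (k-1)))) := by
    rw [dotProduct, ← Fin.sum_univ_eq_sum_range (fun k =>
      (ex v k * ((ex a k + ex a (k+1) + (if k = M then ex a k else 0)) * ex v k
        - ex a (k+1) * ex v (k+1) - (if k = 0 then 0 else ex a k * ex v (k-1))))) (M+1)]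
    apply Finset.sum_congr rfl
    intro j _
    rw [row_eq, ex_coe, ex_coe]
    simp only [Nat.add_sub_cancel]
  rw [step1]
  have hg : ∀ k ∈ range (M+1),
      (ex v k * ((ex a k + ex a (k+1) + (if k = M then ex a k else 0)) * ex v k
        - ex a (k+1) * ex v (k+1) - (if k = 0 then 0 else ex a k * ex v (k-1)))) =
      ex a k * ex v k^2 + ex a (k+1) * ex v k^2
        + (if k = M then ex a M * ex v M^2 else 0)
        - ex a (k+1) * (ex v k * ex v (k+1))
        - (if k = 0 then 0 else ex a k * (ex v k * ex v (k-1))) := by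
    intro k _
    split_ifs with h1 h2 h2 <;> (try subst h1) <;> ring
  rw [Finset.sum_congr rfl hg]
  rw [Finset.sum_sub_distrib, Finset.sum_sub_distrib, Finset.sum_add_distrib,
    Finset.sum_add_distrib, Finset.sum_ite_eq' (range (M+1)),
    if_pos (mem_range.mpr (by omega))]
  rw [show (∑ k ∈ range (M+1), ex a (k+1) * ex v k^2)
      = ∑ k ∈ range M, ex a (k+1) * ex v k^2 by
    rw [Finset.sum_range_succ, haN]; ring]
  rw [show (∑ k ∈ range (M+1), ex a (k+1) * (ex v k * ex v (k+1)))
      = ∑ k ∈ range M, ex a (k+1) * (ex v k * ex v (k+1)) by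
    rw [Finset.sum_range_succ, haN]; ring]
  rw [show (∑ k ∈ range (M+1), (if k = 0 then 0 else ex a k * (ex v k * ex v (k-1))))
      = ∑ k ∈ range M, ex a (k+1) * (ex v (k+1) * ex v k) by
    rw [Finset.sum_range_succ']; simp]
  rw [show (∑ k ∈ range (M+1), ex a k * ex v k^2)
      = (∑ k ∈ range M, ex a (k+1) * ex v (k+1)^2) + ex a 0 * ex v 0^2 from
    Finset.sum_range_succ' _ M]
  unfold quadE
  simp only [Nat.add_sub_cancel]
  rw [show (∑ k ∈ range (M+1), ex a k * qv v k)
      = (∑ k ∈ range M, ex a (k+1) * qv v (k+1)) + ex a 0 * qv v 0 from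
    Finset.sum_range_succ' _ M]
  have hqv0 : qv v 0 = ex v 0 ^2 := by simp [qv]
  have hqvs : ∀ k ∈ range M, ex a (k+1) * qv v (k+1)
      = ex a (k+1) * ex v (k+1)^2 + ex a (k+1) * ex v k^2
        - ex a (k+1) * (ex v k * ex v (k+1)) - ex a (k+1) * (ex v (k+1) * ex v k) := by
    intro k _
    simp only [qv, Nat.add_sub_cancel, Nat.succ_ne_zero, if_false]
    ring
  rw [Finset.sum_congr rfl hqvs, hqv0]
  rw [Finset.sum_sub_distrib, Finset.sum_sub_distrib, Finset.sum_add_distrib]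
  ring

lemma ex_nonneg {N : ℕ} {a : Fin N → ℝ} (ha : ∀ i, 0 ≤ a i) (k : ℕ) : 0 ≤ ex a k := by
  unfold ex; split
  · exact ha _
  · exact le_rfl

lemma ex_mono {N : ℕ} {a b : Fin N → ℝ} (h : ∀ i, a i ≤ b i) (k : ℕ) : ex a k ≤ ex b k := by
  unfold ex; split
  · exact h _
  · exact le_rfl

lemma quadE_mono {N : ℕ} (a b v : Fin N → ℝ) (h : ∀ i, a i ≤ b i) :
    quadE a v ≤ quadE b v := by
  unfold quadE
  exact add_le_add
    (Finset.sum_le_sum fun k _ => mul_le_mul_of_nonneg_right (ex_mono h k) (sq_nonneg _))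
    (mul_le_mul_of_nonneg_right (ex_mono h _) (sq_nonneg _))

lemma quadE_smul {N : ℕ} (c : ℝ) (a v : Fin N → ℝ) :
    quadE (fun i => c * a i) v = c * quadE a v := by
  have hex : ∀ k, ex (fun i => c * a i) k = c * ex a k := by
    intro k; unfold ex; split
    · rfl
    · ring
  unfold quadE
  rw [mul_add, Finset.mul_sum]
  congr 1
  · exact Finset.sum_congr rfl fun k _ => by rw [hex]; ring
  · rw [hex]; ring

lemma quadE_pos {N : ℕ} (_hN : 1 ≤ N) (a v : Fin N → ℝ) (ha : ∀ i, 0 < a i)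
    (hv : v ≠ 0) : 0 < quadE a v := by
  have hnn : ∀ k ∈ range N, 0 ≤ ex a k * qv v k :=
    fun k _ => mul_nonneg (ex_nonneg (fun i => (ha i).le) k) (sq_nonneg _)
  have tail : 0 ≤ ex a (N-1) * (ex v (N-1))^2 :=
    mul_nonneg (ex_nonneg (fun i => (ha i).le) _) (sq_nonneg _)
  rcases (Finset.sum_nonneg hnn).lt_or_eq with h | h
  · exact add_pos_of_pos_of_nonneg h tail
  · exfalso; apply hv
    have hz : ∀ k ∈ range N, ex a k * qv v k = 0 :=
      (Finset.sum_eq_zero_iff_of_nonneg hnn).mp h.symm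
    have hq : ∀ k, k < N → qv v k = 0 := by
      intro k hk
      have h1 := hz k (mem_range.mpr hk)
      have hak : 0 < ex a k := by
        unfold ex; rw [dif_pos hk]; exact ha _
      exact (mul_eq_zero.mp h1).resolve_left (ne_of_gt hak)
    have hvz : ∀ k, k < N → ex v k = 0 := by
      intro k
      induction k with
      | zero =>
        intro h0
        have := hq 0 h0
        simpa [qv, sub_eq_zero, pow_eq_zero_iff] using this
      | succ k ih =>
        intro hk
        have h1 := hq (k+1) hk
        simp only [qv, Nat.add_sub_cancel, Nat.succ_ne_zero, if_false] at h1
        have h2 := sub_eq_zero.mp (sq_eq_zero_iff.mp h1)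
        rw [h2, ih (by omega)]
    funext i
    rw [← ex_coe v i]
    exact hvz i i.isLt

end S13

/-- Lemma of §4.4: condition-number bound for the
preconditioned matrix. If `(1 − Q) ã₀ᵢ ≤ aᵢ ≤ (1 + Q) ã₀ᵢ` with `ã₀ᵢ > 0`,
`0 ≤ Q < 1`, then any generalized eigenvalue `λ` with `A[a] v = λ A[ã₀] v`,
`v ≠ 0`, satisfies `1 − Q ≤ λ ≤ 1 + Q`; hence the ratio of any two generalized
eigenvalues is at most `(1 + Q)/(1 − Q)`. -/
theorem stmt13 {N : ℕ} (hN : 1 ≤ N) (a0 a : Fin N → ℝ) (ha0 : ∀ i, 0 < a0 i)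
    (Q : ℝ) (hQ0 : 0 ≤ Q) (hQ1 : Q < 1)
    (hab : ∀ i, (1 - Q) * a0 i ≤ a i ∧ a i ≤ (1 + Q) * a0 i) :
    (∀ (v : Fin N → ℝ), v ≠ 0 → ∀ lam : ℝ,
      (stiff a).mulVec v = lam • (stiff a0).mulVec v →
      1 - Q ≤ lam ∧ lam ≤ 1 + Q) ∧
    (∀ (v w : Fin N → ℝ), v ≠ 0 → w ≠ 0 → ∀ lam mu : ℝ,
      (stiff a).mulVec v = lam • (stiff a0).mulVec v →
      (stiff a).mulVec w = mu • (stiff a0).mulVec w →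
      lam / mu ≤ (1 + Q) / (1 - Q)) := by
  have key : ∀ (v : Fin N → ℝ), v ≠ 0 → ∀ lam : ℝ,
      (stiff a).mulVec v = lam • (stiff a0).mulVec v →
      1 - Q ≤ lam ∧ lam ≤ 1 + Q := by
    intro v hv lam heq
    have hP : 0 < S13.quadE a0 v := S13.quadE_pos hN a0 v ha0 hv
    have hdot : S13.quadE a v = lam * S13.quadE a0 v := by
      rw [← S13.quad_eq, ← S13.quad_eq, heq, dotProduct_smul, smul_eq_mul]
    have hup : S13.quadE a v ≤ (1+Q) * S13.quadE a0 v := by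
      calc S13.quadE a v ≤ S13.quadE (fun i => (1+Q) * a0 i) v :=
            S13.quadE_mono _ _ _ (fun i => (hab i).2)
        _ = (1+Q) * S13.quadE a0 v := S13.quadE_smul _ _ _
    have hlo : (1-Q) * S13.quadE a0 v ≤ S13.quadE a v := by
      calc (1-Q) * S13.quadE a0 v = S13.quadE (fun i => (1-Q) * a0 i) v :=
            (S13.quadE_smul _ _ _).symm
        _ ≤ S13.quadE a v := S13.quadE_mono _ _ _ (fun i => (hab i).1)
    rw [hdot] at hup hlo
    exact ⟨(mul_le_mul_iff_of_pos_right hP).mp hlo, (mul_le_mul_iff_of_pos_right hP).mp hup⟩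
  refine ⟨key, ?_⟩
  intro v w hv hw lam mu h1 h2
  obtain ⟨hl1, hl2⟩ := key v hv lam h1
  obtain ⟨hm1, hm2⟩ := key w hw mu h2
  have h1Q : 0 < 1 - Q := by linarith
  exact div_le_div₀ (by linarith) hl2 h1Q hm1
end

section
/- Let L ≥ 1 and ω ∈ ℝ. Then there exist functions g_ν : Fin 2 → ℂ for ν = 0,…,L−1 such that for every tuple of binary digits j : Fin L → Fin 2, exp(i·ω·(Σ_{ν=0}^{L−1} j_ν 2^ν)) = Π_{ν=0}^{L−1} g_ν(j_ν). In other words, the quantized (binary-folded) tensor of the vector (exp(i ω k))_{k=0}^{2^L−1} is an elementary (rank-1) tensor. -/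
/-- Proposition 4.1(A): the complex exponential sampled on a
uniform dyadic grid has QTT rank 1. For `L ≥ 1` and `ω ∈ ℝ` there exist
functions `g_ν : Fin 2 → ℂ` such that for all binary digit tuples `j`,
`exp(i ω Σ_ν j_ν 2^ν) = Π_ν g_ν(j_ν)`. -/
theorem stmt14 (L : ℕ) (hL : 1 ≤ L) (ω : ℝ) :
    ∃ g : Fin L → Fin 2 → ℂ,
      ∀ j : Fin L → Fin 2,
        Complex.exp (Complex.I * (ω : ℂ) *
            ((∑ ν : Fin L, (j ν : ℕ) * 2 ^ (ν : ℕ) : ℕ) : ℂ)) =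
          ∏ ν : Fin L, g ν (j ν) := by
  refine ⟨fun ν b => Complex.exp (Complex.I * (ω : ℂ) * ((b : ℕ) * 2 ^ (ν : ℕ) : ℕ)), fun j => ?_⟩
  rw [← Complex.exp_sum]
  congr 1
  rw [← Finset.mul_sum]
  congr 1
  push_cast
  rfl
end

section
/- Let L ≥ 1 and ω ∈ ℝ. Then there exist matrices G_ν(j) ∈ ℝ^{2×2} for each ν = 0,…,L−1 and j ∈ Fin 2, and vectors p, q ∈ ℝ², such that for every tuple of binary digits j : Fin L → Fin 2, sin(ω·(Σ_{ν=0}^{L−1} j_ν 2^ν)) = pᵀ (G_0(j₀) G_1(j₁) ⋯ G_{L−1}(j_{L−1})) q; moreover with the same cores G_ν one obtains cos(ω·(Σ_{ν=0}^{L−1} j_ν 2^ν)) by replacing p with another vector p' ∈ ℝ². -/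
open Matrix

/-- Rotation matrix by angle θ. -/
noncomputable def rotM (θ : ℝ) : Matrix (Fin 2) (Fin 2) ℝ :=
  !![Real.cos θ, -Real.sin θ; Real.sin θ, Real.cos θ]

lemma rotM_zero : rotM 0 = 1 := by
  simp [rotM]
  ext i k
  fin_cases i <;> fin_cases k <;> simp [Matrix.one_apply]

lemma rotM_mul (a b : ℝ) : rotM a * rotM b = rotM (a + b) := by
  ext i k
  fin_cases i <;> fin_cases k <;>
    simp [rotM, Matrix.mul_apply, Fin.sum_univ_two, Real.cos_add, Real.sin_add] <;> ring

lemma rotM_list (l : List ℝ) : (l.map rotM).prod = rotM l.sum := by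
  induction l with
  | nil => simp [rotM_zero]
  | cons a t ih => simp [ih, rotM_mul]

/-- Proposition 4.1(B): `sin(ωx)` and `cos(ωx)` sampled on a
uniform dyadic grid have QTT rank 2. For `L ≥ 1` and `ω ∈ ℝ` there exist `2×2`
cores `G_ν(j)` and boundary vectors `p, p', q ∈ ℝ²` such that for all binary
digit tuples `j`,
`sin(ω Σ_ν j_ν 2^ν) = pᵀ (G_0(j₀)⋯G_{L−1}(j_{L−1})) q`, and with the same
cores, `cos(ω Σ_ν j_ν 2^ν) = p'ᵀ (G_0(j₀)⋯G_{L−1}(j_{L−1})) q`. -/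
theorem stmt15 (L : ℕ) (hL : 1 ≤ L) (ω : ℝ) :
    ∃ (G : Fin L → Fin 2 → Matrix (Fin 2) (Fin 2) ℝ) (p p' q : Fin 2 → ℝ),
      ∀ j : Fin L → Fin 2,
        (Real.sin (ω * ((∑ ν : Fin L, (j ν : ℕ) * 2 ^ (ν : ℕ) : ℕ) : ℝ)) =
          p ⬝ᵥ ((List.ofFn fun ν : Fin L => G ν (j ν)).prod).mulVec q) ∧
        (Real.cos (ω * ((∑ ν : Fin L, (j ν : ℕ) * 2 ^ (ν : ℕ) : ℕ) : ℝ)) =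
          p' ⬝ᵥ ((List.ofFn fun ν : Fin L => G ν (j ν)).prod).mulVec q) := by
  refine ⟨fun ν j => rotM (ω * ((j : ℕ) * 2 ^ (ν : ℕ))), ![0, 1], ![1, 0], ![1, 0], ?_⟩
  intro j
  have hprod : (List.ofFn fun ν : Fin L => rotM (ω * ((j ν : ℕ) * 2 ^ (ν : ℕ)))).prod =
      rotM (ω * ((∑ ν : Fin L, (j ν : ℕ) * 2 ^ (ν : ℕ) : ℕ) : ℝ)) := by
    have : (List.ofFn fun ν : Fin L => rotM (ω * ((j ν : ℕ) * 2 ^ (ν : ℕ)))) =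
        (List.ofFn fun ν : Fin L => (ω * ((j ν : ℕ) * 2 ^ (ν : ℕ)))).map rotM := by
      rw [List.map_ofFn]; rfl
    rw [this, rotM_list, List.sum_ofFn]
    congr 1
    push_cast
    rw [Finset.mul_sum]
  rw [hprod]
  set θ := ω * ((∑ ν : Fin L, (j ν : ℕ) * 2 ^ (ν : ℕ) : ℕ) : ℝ)
  constructor <;>
    simp [rotM, Matrix.mulVec, dotProduct, Fin.sum_univ_two]
end

section
/- Let L ≥ 1, m ∈ ℕ, and let P be a real polynomial of degree at most m. Then there exist matrices G_ν(j) ∈ ℝ^{(m+1)×(m+1)} for each ν = 0,…,L−1 and j ∈ Fin 2, and vectors p, q ∈ ℝ^{m+1}, such that for every tuple of binary digits j : Fin L → Fin 2, P(Σ_{ν=0}^{L−1} j_ν 2^ν) = pᵀ (G_0(j₀) G_1(j₁) ⋯ G_{L−1}(j_{L−1})) q. -/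
open Matrix

/-- The "shift by `t`" Pascal-type core. -/
noncomputable def shiftCore (n : ℕ) (t : ℝ) : Matrix (Fin (n + 1)) (Fin (n + 1)) ℝ :=
  fun k l => (Nat.choose l k : ℝ) * t ^ ((l : ℕ) - (k : ℕ))

lemma vecMul_shiftCore (n : ℕ) (s t : ℝ) :
    (fun k : Fin (n + 1) => s ^ (k : ℕ)) ᵥ* shiftCore n t
      = fun l : Fin (n + 1) => (s + t) ^ (l : ℕ) := by
  funext l
  have hl : (l : ℕ) + 1 ≤ n + 1 := Nat.succ_le_succ l.is_le
  have : ∑ k ∈ Finset.range (n + 1),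
      s ^ k * ((Nat.choose l k : ℝ) * t ^ ((l : ℕ) - k)) = (s + t) ^ (l : ℕ) := by
    rw [add_pow]
    rw [← Finset.sum_subset (Finset.range_subset_range.2 hl)]
    · apply Finset.sum_congr rfl
      intro k hk
      ring
    · intro k _ hk
      simp only [Finset.mem_range, not_lt] at hk
      rw [Nat.choose_eq_zero_of_lt hk]
      simp
  simp only [Matrix.vecMul, dotProduct, shiftCore]
  rw [Fin.sum_univ_eq_sum_range (fun k => s ^ k * ((Nat.choose l k : ℝ) * t ^ ((l : ℕ) - k)))]
  exact this

lemma vecMul_shiftCore_list (n : ℕ) (ts : List ℝ) (s : ℝ) :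
    (fun k : Fin (n + 1) => s ^ (k : ℕ)) ᵥ* (ts.map (shiftCore n)).prod
      = fun l : Fin (n + 1) => (s + ts.sum) ^ (l : ℕ) := by
  induction ts generalizing s with
  | nil => simp
  | cons t ts ih =>
      simp only [List.map_cons, List.prod_cons, List.sum_cons, ← Matrix.vecMul_vecMul,
        vecMul_shiftCore, ih, add_assoc]

/-- Proposition 4.1(C): a polynomial of degree at most `m`
sampled on a uniform dyadic grid has QTT rank at most `m + 1`. For `L ≥ 1` and
a real polynomial `P` with `deg P ≤ m` there exist `(m+1)×(m+1)` cores
`G_ν(j)` and boundary vectors `p, q ∈ ℝ^{m+1}` such that for all binary digit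
tuples `j`, `P(Σ_ν j_ν 2^ν) = pᵀ (G_0(j₀)⋯G_{L−1}(j_{L−1})) q`. -/
theorem stmt16 (L m : ℕ) (hL : 1 ≤ L) (P : Polynomial ℝ) (hP : P.natDegree ≤ m) :
    ∃ (G : Fin L → Fin 2 → Matrix (Fin (m + 1)) (Fin (m + 1)) ℝ)
      (p q : Fin (m + 1) → ℝ),
      ∀ j : Fin L → Fin 2,
        P.eval ((∑ ν : Fin L, (j ν : ℕ) * 2 ^ (ν : ℕ) : ℕ) : ℝ) =
          p ⬝ᵥ ((List.ofFn fun ν : Fin L => G ν (j ν)).prod).mulVec q := by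
  refine ⟨fun ν j => shiftCore m ((j : ℕ) * 2 ^ (ν : ℕ) : ℕ),
    fun k => (0 : ℝ) ^ (k : ℕ), fun l => P.coeff l, fun j => ?_⟩
  have hlist : (List.ofFn fun ν : Fin L => shiftCore m (((j ν : ℕ) * 2 ^ (ν : ℕ) : ℕ) : ℝ))
      = (List.ofFn fun ν : Fin L => (((j ν : ℕ) * 2 ^ (ν : ℕ) : ℕ) : ℝ)).map (shiftCore m) := by
    rw [List.map_ofFn]
    rfl
  rw [Matrix.dotProduct_mulVec, hlist, vecMul_shiftCore_list]
  have hsum : (List.ofFn fun ν : Fin L => (((j ν : ℕ) * 2 ^ (ν : ℕ) : ℕ) : ℝ)).sum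
      = ((∑ ν : Fin L, (j ν : ℕ) * 2 ^ (ν : ℕ) : ℕ) : ℝ) := by
    rw [List.sum_ofFn]
    push_cast
    rfl
  rw [hsum, zero_add]
  rw [Polynomial.eval_eq_sum_range' (Nat.lt_succ_of_le hP)]
  simp only [dotProduct, mul_comm]
  exact (Fin.sum_univ_eq_sum_range _ _).symm
end

section
/- Let L ≥ 1 and let x, y : (Fin L → Fin 2) → ℝ admit MPS/QTT representations of bond dimensions r and s respectively: x(j) = pᵀ (F_0(j₀)⋯F_{L−1}(j_{L−1})) q with F_ν(j) ∈ ℝ^{r×r}, p, q ∈ ℝ^r, and y(j) = uᵀ (H_0(j₀)⋯H_{L−1}(j_{L−1})) v with H_ν(j) ∈ ℝ^{s×s}, u, v ∈ ℝ^s. Then the pointwise (Hadamard) product x·y, defined by (x·y)(j) = x(j) y(j), admits an MPS/QTT representation of bond dimension r·s. -/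
open Matrix Kronecker

lemma kron_list_prod {r s : ℕ} : ∀ (L : ℕ) (A : Fin L → Matrix (Fin r) (Fin r) ℝ)
    (B : Fin L → Matrix (Fin s) (Fin s) ℝ),
    (List.ofFn fun ν => A ν ⊗ₖ B ν).prod
      = (List.ofFn A).prod ⊗ₖ (List.ofFn B).prod := by
  intro L
  induction L with
  | zero => intro A B; simp [Matrix.one_kronecker_one]
  | succ n ih =>
      intro A B
      simp only [List.ofFn_succ, List.prod_cons]
      rw [ih (fun ν => A ν.succ) (fun ν => B ν.succ), Matrix.mul_kronecker_mul]


lemma sum4_swap {α β : Type*} [Fintype α] [Fintype β] (f : α → α → β → β → ℝ) :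
    ∑ k : β, ∑ k' : β, ∑ i : α, ∑ i' : α, f i i' k k'
      = ∑ i : α, ∑ i' : α, ∑ k : β, ∑ k' : β, f i i' k k' :=
  calc ∑ k : β, ∑ k' : β, ∑ i : α, ∑ i' : α, f i i' k k'
      = ∑ k : β, ∑ i : α, ∑ k' : β, ∑ i' : α, f i i' k k' :=
        Finset.sum_congr rfl fun _ _ => Finset.sum_comm
    _ = ∑ i : α, ∑ k : β, ∑ k' : β, ∑ i' : α, f i i' k k' := Finset.sum_comm
    _ = ∑ i : α, ∑ k : β, ∑ i' : α, ∑ k' : β, f i i' k k' :=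
        Finset.sum_congr rfl fun _ _ => Finset.sum_congr rfl fun _ _ => Finset.sum_comm
    _ = ∑ i : α, ∑ i' : α, ∑ k : β, ∑ k' : β, f i i' k k' :=
        Finset.sum_congr rfl fun _ _ => Finset.sum_comm

lemma kron_bilinear {r s : ℕ} (M : Matrix (Fin r) (Fin r) ℝ) (N : Matrix (Fin s) (Fin s) ℝ)
    (p q : Fin r → ℝ) (u v : Fin s → ℝ) :
    (fun i : Fin r × Fin s => p i.1 * u i.2) ⬝ᵥ (M ⊗ₖ N).mulVec
      (fun i : Fin r × Fin s => q i.1 * v i.2)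
      = (p ⬝ᵥ M.mulVec q) * (u ⬝ᵥ N.mulVec v) := by
  have hL : (fun i : Fin r × Fin s => p i.1 * u i.2) ⬝ᵥ (M ⊗ₖ N).mulVec
      (fun i : Fin r × Fin s => q i.1 * v i.2)
      = ∑ i, ∑ k, ∑ i', ∑ k',
          p i * u k * (M i i' * N k k' * (q i' * v k')) := by
    simp [dotProduct, mulVec, Fintype.sum_prod_type, Finset.mul_sum]
  have hR : (p ⬝ᵥ M.mulVec q) * (u ⬝ᵥ N.mulVec v)
      = ∑ i, ∑ i', ∑ k, ∑ k',
          p i * M i i' * q i' * (u k * N k k' * v k') := by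
    simp only [dotProduct, mulVec, Finset.sum_mul, Finset.mul_sum, mul_assoc]
    rw [sum4_swap (f := fun i i' k k' => p i * (M i i' * (q i' * (u k * (N k k' * v k')))))]
  rw [hL, hR]
  apply Finset.sum_congr rfl; intro i _
  rw [Finset.sum_comm]
  apply Finset.sum_congr rfl; intro i' _
  apply Finset.sum_congr rfl; intro k _
  apply Finset.sum_congr rfl; intro k' _
  ring

/-- Proposition 4.1(D): the Hadamard product of QTT tensors
of bond dimensions `r` and `s` has bond dimension `r·s`. If
`x(j) = pᵀ (F_0(j₀)⋯F_{L−1}(j_{L−1})) q` with `r×r` cores and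
`y(j) = uᵀ (H_0(j₀)⋯H_{L−1}(j_{L−1})) v` with `s×s` cores, then there are
`(r·s)×(r·s)` cores `G_ν(j)` and vectors `a, b ∈ ℝ^{r·s}` with
`x(j)·y(j) = aᵀ (G_0(j₀)⋯G_{L−1}(j_{L−1})) b` for all `j`. -/
theorem stmt17 (L : ℕ) (hL : 1 ≤ L) (r s : ℕ)
    (F : Fin L → Fin 2 → Matrix (Fin r) (Fin r) ℝ) (p q : Fin r → ℝ)
    (H : Fin L → Fin 2 → Matrix (Fin s) (Fin s) ℝ) (u v : Fin s → ℝ)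
    (x y : (Fin L → Fin 2) → ℝ)
    (hx : ∀ j : Fin L → Fin 2,
      x j = p ⬝ᵥ ((List.ofFn fun ν : Fin L => F ν (j ν)).prod).mulVec q)
    (hy : ∀ j : Fin L → Fin 2,
      y j = u ⬝ᵥ ((List.ofFn fun ν : Fin L => H ν (j ν)).prod).mulVec v) :
    ∃ (G : Fin L → Fin 2 → Matrix (Fin (r * s)) (Fin (r * s)) ℝ)
      (a b : Fin (r * s) → ℝ),
      ∀ j : Fin L → Fin 2,
        x j * y j = a ⬝ᵥ ((List.ofFn fun ν : Fin L => G ν (j ν)).prod).mulVec b := by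
  set e : Fin r × Fin s ≃ Fin (r * s) := finProdFinEquiv with he
  refine ⟨fun ν jν => (Matrix.reindex e e) (F ν jν ⊗ₖ H ν jν),
    fun i => p (e.symm i).1 * u (e.symm i).2,
    fun i => q (e.symm i).1 * v (e.symm i).2, ?_⟩
  intro j
  have hre : (List.ofFn fun ν : Fin L =>
      (Matrix.reindex e e) (F ν (j ν) ⊗ₖ H ν (j ν))).prod
      = (Matrix.reindex e e) ((List.ofFn fun ν : Fin L => F ν (j ν) ⊗ₖ H ν (j ν)).prod) := by
    have h2 := map_list_prod (Matrix.reindexAlgEquiv ℝ ℝ e)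
      (List.ofFn fun ν : Fin L => F ν (j ν) ⊗ₖ H ν (j ν))
    simp only [List.map_ofFn, Function.comp, Matrix.reindexAlgEquiv_apply] at h2
    exact h2.symm
  rw [hx, hy, hre, kron_list_prod, ← kron_bilinear]
  simp only [dotProduct, mulVec, Matrix.reindex_apply, Matrix.submatrix_apply]
  rw [← e.sum_comp (fun i => _)]
  apply Finset.sum_congr rfl; intro i _
  simp only [Equiv.symm_apply_apply]
  congr 1
  rw [← e.sum_comp (fun k => _)]
  simp
end

section
/- Let L ≥ 1, N = 2^L, and let S ∈ ℝ^{N×N} be the upper shift matrix, S_{k,k'} = 1 if k' = k + 1 and S_{k,k'} = 0 otherwise. Then there exist matrices G_ν(i, i') ∈ ℝ^{2×2} for each ν = 0,…,L−1 and i, i' ∈ Fin 2, and vectors p, q ∈ ℝ², such that for all row and column indices k, k' ∈ Fin N with little-endian binary digit expansions k = Σ_ν i_ν 2^ν, k' = Σ_ν i'_ν 2^ν, one has S_{k,k'} = pᵀ (G_0(i₀, i'₀) G_1(i₁, i'₁) ⋯ G_{L−1}(i_{L−1}, i'_{L−1})) q. -/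
open Matrix

/-- Little-endian binary coding: the index `Σ_ν j_ν 2^ν ∈ Fin (2^L)` of a tuple
of binary digits `j : Fin L → Fin 2`. -/
def binIdx (L : ℕ) (j : Fin L → Fin 2) : Fin (2 ^ L) :=
  ⟨∑ ν : Fin L, (j ν : ℕ) * 2 ^ (ν : ℕ), by
    have key : ∀ n : ℕ, ∑ ν ∈ Finset.range n, 2 ^ ν < 2 ^ n := by
      intro n
      induction n with
      | zero => simp
      | succ n ih => rw [Finset.sum_range_succ, pow_succ]; omega
    calc ∑ ν : Fin L, (j ν : ℕ) * 2 ^ (ν : ℕ)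
        ≤ ∑ ν : Fin L, 2 ^ (ν : ℕ) := by
          refine Finset.sum_le_sum fun ν _ => ?_
          have : (j ν : ℕ) ≤ 1 := Nat.lt_succ_iff.mp (j ν).isLt
          nlinarith [pow_pos (by norm_num : (0 : ℕ) < 2) (ν : ℕ)]
      _ = ∑ ν ∈ Finset.range L, 2 ^ ν := Fin.sum_univ_eq_sum_range (fun k => 2 ^ k) L
      _ < 2 ^ L := key L⟩

/-- The upper shift matrix: `S_{k,k'} = 1` if `k' = k + 1` and `0` otherwise. -/
def shiftM (N : ℕ) : Matrix (Fin N) (Fin N) ℝ :=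
  Matrix.of fun k k' => if (k' : ℕ) = (k : ℕ) + 1 then 1 else 0

def gCore (i i' : Fin 2) : Matrix (Fin 2) (Fin 2) ℝ :=
  !![if i = 1 ∧ i' = 0 then 1 else 0, if i = 0 ∧ i' = 1 then 1 else 0;
     0, if i = i' then 1 else 0]

lemma prod_entries (n : ℕ) (i i' : Fin n → Fin 2) :
    ((List.ofFn fun ν : Fin n => gCore (i ν) (i' ν)).prod 0 0 =
      (if (∑ ν : Fin n, (i' ν : ℕ) * 2 ^ (ν:ℕ)) + 2 ^ n
          = (∑ ν : Fin n, (i ν : ℕ) * 2 ^ (ν:ℕ)) + 1 then 1 else 0)) ∧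
    ((List.ofFn fun ν : Fin n => gCore (i ν) (i' ν)).prod 0 1 =
      (if (∑ ν : Fin n, (i' ν : ℕ) * 2 ^ (ν:ℕ))
          = (∑ ν : Fin n, (i ν : ℕ) * 2 ^ (ν:ℕ)) + 1 then 1 else 0)) ∧
    ((List.ofFn fun ν : Fin n => gCore (i ν) (i' ν)).prod 1 0 = 0) ∧
    ((List.ofFn fun ν : Fin n => gCore (i ν) (i' ν)).prod 1 1 =
      (if (∑ ν : Fin n, (i' ν : ℕ) * 2 ^ (ν:ℕ))
          = (∑ ν : Fin n, (i ν : ℕ) * 2 ^ (ν:ℕ)) then 1 else 0)) := by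
  induction n with
  | zero => simp [Matrix.one_apply]
  | succ n ih =>
    have hk : (∑ ν : Fin n, ((i ν.castSucc : ℕ)) * 2 ^ (ν:ℕ)) < 2 ^ n :=
      (binIdx n fun ν => i ν.castSucc).isLt
    have hk' : (∑ ν : Fin n, ((i' ν.castSucc : ℕ)) * 2 ^ (ν:ℕ)) < 2 ^ n :=
      (binIdx n fun ν => i' ν.castSucc).isLt
    obtain ⟨h00, h01, h10, h11⟩ := ih (fun ν => i ν.castSucc) (fun ν => i' ν.castSucc)
    simp only [Fin.sum_univ_castSucc, Fin.coe_castSucc, Fin.val_last]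
    rw [List.ofFn_succ']
    simp only [List.concat_eq_append, List.prod_append, List.prod_cons, List.prod_nil, mul_one]
    simp only [Matrix.mul_apply, Fin.sum_univ_two]
    simp only [h00, h01, h10, h11]
    have h2 : (2:ℕ) ^ (n+1) = 2^n + 2^n := by ring
    obtain hi | hi := Fin.exists_fin_two.mp ⟨i (Fin.last n), rfl⟩ <;>
      obtain hi' | hi' := Fin.exists_fin_two.mp ⟨i' (Fin.last n), rfl⟩ <;>
      simp only [hi, hi', gCore, Matrix.cons_val_zero, Matrix.cons_val_one, Matrix.head_cons,
        Matrix.cons_val', Matrix.head_fin_const, Matrix.of_apply, Fin.isValue] <;>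
      norm_num
    all_goals try constructorm* _ ∧ _
    all_goals (try split_ifs) <;> first | rfl | (exfalso; omega) | omega

/-- exact rank-2 QTT representation of the shift matrix,
Kazeev–Khoromskij, used in §4.3. For `L ≥ 1` there exist `2×2` cores
`G_ν(i, i')` and vectors `p, q ∈ ℝ²` such that for all row/column binary digit
tuples `i, i'`, `S_{Σ i_ν 2^ν, Σ i'_ν 2^ν} = pᵀ (G_0(i₀,i'₀)⋯G_{L−1}(i_{L−1},i'_{L−1})) q`. -/
theorem stmt18 (L : ℕ) (hL : 1 ≤ L) :
    ∃ (G : Fin L → Fin 2 → Fin 2 → Matrix (Fin 2) (Fin 2) ℝ) (p q : Fin 2 → ℝ),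
      ∀ i i' : Fin L → Fin 2,
        shiftM (2 ^ L) (binIdx L i) (binIdx L i') =
          p ⬝ᵥ ((List.ofFn fun ν : Fin L => G ν (i ν) (i' ν)).prod).mulVec q := by
  refine ⟨fun _ => gCore, ![1, 0], ![0, 1], fun i i' => ?_⟩
  have h := (prod_entries L i i').2.1
  have hcoe : ((binIdx L i : ℕ)) = ∑ ν : Fin L, (i ν : ℕ) * 2 ^ (ν : ℕ) := rfl
  have hcoe' : ((binIdx L i' : ℕ)) = ∑ ν : Fin L, (i' ν : ℕ) * 2 ^ (ν : ℕ) := rfl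
  simp only [shiftM, Matrix.of_apply, hcoe, hcoe', dotProduct, Matrix.mulVec,
    Fin.sum_univ_two, Matrix.cons_val_zero, Matrix.cons_val_one, Matrix.head_cons]
  rw [h]; ring
end
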